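/- Let μ ∈ 𝒫(ℝ) and n ∈ ℕ, and let μⁿ be the discretisation of μ supported on the grid {k/n : k ∈ ℤ} defined by μⁿ({k/n}) := ∫_{[(k−1)/n,(k+1)/n)} (1 − |nx − k|) μ(dx). Then μⁿ is a probability measure and 𝒲₁(μⁿ, μ) ≤ 1/n. Moreover, for every measurable f : ℝ → ℝ (integrable as needed), ∫ f dμⁿ = ∫ f_n dμ, where f_n(x) := (1 + ⌊nx⌋ − nx) f(⌊nx⌋/n) + (nx − ⌊nx⌋) f((1 + ⌊nx⌋)/n). -/

import Mathlib

open MeasureTheory Filter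

namespace MMOT

/-- Weight of the discretisation of `μ` at the grid point `k/n`:
`∫_{[(k−1)/n,(k+1)/n)} (1 − |nx − k|) μ(dx)`. -/
noncomputable def gridWeight (μ : Measure ℝ) (n : ℕ) (k : ℤ) : ℝ :=
  ∫ x in Set.Ico (((k : ℝ) - 1) / n) (((k : ℝ) + 1) / n), (1 - |(n : ℝ) * x - (k : ℝ)|) ∂μ

/-- The grid discretisation `μⁿ` of `μ`, supported on `{k/n : k ∈ ℤ}`. -/
noncomputable def gridDisc (μ : Measure ℝ) (n : ℕ) : Measure ℝ :=
  Measure.sum fun k : ℤ => ENNReal.ofReal (gridWeight μ n k) • Measure.dirac ((k : ℝ) / n)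

/-- Wasserstein-1 distance on probability measures on `ℝ`. -/
noncomputable def W1R (μ ν : Measure ℝ) : ℝ :=
  sInf {r | ∃ γ : Measure (ℝ × ℝ), IsProbabilityMeasure γ ∧ γ.map Prod.fst = μ ∧
    γ.map Prod.snd = ν ∧ Integrable (fun p => |p.1 - p.2|) γ ∧
    r = ∫ p, |p.1 - p.2| ∂γ}

/-- The piecewise-linear interpolation `f_n` of `f` along the grid `{k/n}`. -/
noncomputable def interp (f : ℝ → ℝ) (n : ℕ) (x : ℝ) : ℝ :=
  (1 + (⌊(n : ℝ) * x⌋ : ℝ) - (n : ℝ) * x) * f ((⌊(n : ℝ) * x⌋ : ℝ) / n) +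
    ((n : ℝ) * x - (⌊(n : ℝ) * x⌋ : ℝ)) * f ((1 + (⌊(n : ℝ) * x⌋ : ℝ)) / n)

open scoped ENNReal

/-! ### Auxiliary definitions -/

def gI (n : ℕ) (k : ℤ) : Set ℝ := Set.Ico (((k : ℝ) - 1) / n) (((k : ℝ) + 1) / n)

noncomputable def gd (n : ℕ) (k : ℤ) (x : ℝ) : ℝ≥0∞ := ENNReal.ofReal (1 - |(n : ℝ) * x - (k : ℝ)|)

noncomputable def gnu (μ : Measure ℝ) (n : ℕ) (k : ℤ) : Measure ℝ :=
  (μ.restrict (gI n k)).withDensity (gd n k)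

noncomputable def gam (μ : Measure ℝ) (n : ℕ) : Measure (ℝ × ℝ) :=
  Measure.sum fun k : ℤ => (gnu μ n k).map (fun x => ((k : ℝ) / n, x))

lemma measurableSet_gI (n : ℕ) (k : ℤ) : MeasurableSet (gI n k) := measurableSet_Ico

lemma measurable_gd (n : ℕ) (k : ℤ) : Measurable (gd n k) := by
  apply Measurable.ennreal_ofReal; fun_prop

lemma mem_gI_iff {n : ℕ} (hn : 0 < n) {x : ℝ} {k : ℤ} :
    x ∈ gI n k ↔ k = ⌊(n : ℝ) * x⌋ ∨ k = ⌊(n : ℝ) * x⌋ + 1 := by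
  have hN : (0 : ℝ) < n := by exact_mod_cast hn
  have h1 : ((k : ℝ) - 1) / n ≤ x ↔ (k : ℝ) - 1 ≤ (n : ℝ) * x := by
    rw [div_le_iff₀ hN]; constructor <;> intro h <;> nlinarith [h]
  have h2 : x < ((k : ℝ) + 1) / n ↔ (n : ℝ) * x < (k : ℝ) + 1 := by
    rw [lt_div_iff₀ hN]; constructor <;> intro h <;> nlinarith [h]
  have h3 : ((k : ℝ) - 1 ≤ (n : ℝ) * x) ↔ (k - 1 ≤ ⌊(n : ℝ) * x⌋) := by
    rw [Int.le_floor]; push_cast; rfl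
  have h4 : ((n : ℝ) * x < (k : ℝ) + 1) ↔ (⌊(n : ℝ) * x⌋ < k + 1) := by
    rw [Int.floor_lt]; push_cast; rfl
  constructor
  · rintro ⟨ha, hb⟩
    have := h3.mp (h1.mp ha); have := h4.mp (h2.mp hb); omega
  · intro h
    have hk1 : k - 1 ≤ ⌊(n : ℝ) * x⌋ := by omega
    have hk2 : ⌊(n : ℝ) * x⌋ < k + 1 := by omega
    exact ⟨h1.mpr (h3.mpr hk1), h2.mpr (h4.mpr hk2)⟩

lemma abs_le_one_of_mem_gI {n : ℕ} (hn : 0 < n) {x : ℝ} {k : ℤ}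
    (hx : x ∈ gI n k) : |(n : ℝ) * x - (k : ℝ)| ≤ 1 := by
  have hN : (0 : ℝ) < n := by exact_mod_cast hn
  obtain ⟨h1, h2⟩ := hx
  rw [div_le_iff₀ hN] at h1
  rw [lt_div_iff₀ hN] at h2
  rw [abs_le]
  constructor <;> nlinarith [h1, h2]

lemma tsum_support_two {M : Type*} [AddCommMonoid M] [TopologicalSpace M] [T2Space M]
    (F : ℤ → M) (m : ℤ) (h : ∀ k, k ≠ m → k ≠ m + 1 → F k = 0) :
    ∑' k, F k = F m + F (m + 1) := by
  have hs : ∀ b ∉ ({m, m + 1} : Finset ℤ), F b = 0 := by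
    intro b hb
    simp only [Finset.mem_insert, Finset.mem_singleton] at hb
    push_neg at hb
    exact h b hb.1 hb.2
  rw [tsum_eq_sum hs, Finset.sum_pair (by omega : m ≠ m + 1)]

lemma tsum_gd_indicator {n : ℕ} (hn : 0 < n) (x : ℝ) :
    ∑' k : ℤ, (gI n k).indicator (gd n k) x = 1 := by
  set m := ⌊(n : ℝ) * x⌋ with hm
  have hmem1 : x ∈ gI n m := (mem_gI_iff hn).mpr (Or.inl rfl)
  have hmem2 : x ∈ gI n (m + 1) := (mem_gI_iff hn).mpr (Or.inr rfl)
  have hfl : (m : ℝ) ≤ (n : ℝ) * x := Int.floor_le _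
  have hfu : (n : ℝ) * x < (m : ℝ) + 1 := Int.lt_floor_add_one _
  rw [tsum_support_two _ m (fun k hk1 hk2 => by
    apply Set.indicator_of_notMem
    rw [mem_gI_iff hn]; push_neg; exact ⟨hk1, hk2⟩)]
  rw [Set.indicator_of_mem hmem1, Set.indicator_of_mem hmem2]
  unfold gd
  have e1 : |(n : ℝ) * x - (m : ℝ)| = (n : ℝ) * x - (m : ℝ) := abs_of_nonneg (by linarith)
  have e2 : |(n : ℝ) * x - ((m + 1 : ℤ) : ℝ)| = (m : ℝ) + 1 - (n : ℝ) * x := by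
    push_cast
    rw [abs_of_nonpos (by linarith)]; ring
  rw [e1, e2]
  rw [← ENNReal.ofReal_add (by linarith) (by linarith)]
  rw [show (1 - ((n : ℝ) * x - (m : ℝ))) + (1 - ((m : ℝ) + 1 - (n : ℝ) * x)) = 1 by ring]
  exact ENNReal.ofReal_one

lemma gnu_eq_withDensity (μ : Measure ℝ) (n : ℕ) (k : ℤ) :
    gnu μ n k = μ.withDensity ((gI n k).indicator (gd n k)) := by
  rw [gnu, withDensity_indicator (measurableSet_gI n k)]

lemma map_snd_gam (μ : Measure ℝ) (n : ℕ) (hn : 0 < n) :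
    (gam μ n).map Prod.snd = μ := by
  rw [gam, Measure.map_sum measurable_snd.aemeasurable]
  have h1 : ∀ k : ℤ, ((gnu μ n k).map (fun x => ((k : ℝ) / n, x))).map Prod.snd = gnu μ n k := by
    intro k
    rw [Measure.map_map measurable_snd measurable_prodMk_left]
    simp [Function.comp_def]
  simp_rw [h1, gnu_eq_withDensity]
  rw [← withDensity_tsum (fun k => (measurable_gd n k).indicator (measurableSet_gI n k))]
  have h2 : (∑' k : ℤ, (gI n k).indicator (gd n k)) = (1 : ℝ → ℝ≥0∞) := by
    funext x
    rw [ENNReal.tsum_apply]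
    exact tsum_gd_indicator hn x
  rw [h2, withDensity_one]


lemma tent_nonneg_of_mem {n : ℕ} (hn : 0 < n) {x : ℝ} {k : ℤ} (hx : x ∈ gI n k) :
    0 ≤ 1 - |(n : ℝ) * x - (k : ℝ)| := by
  have := abs_le_one_of_mem_gI hn hx; linarith

lemma integrable_tent (μ : Measure ℝ) [IsFiniteMeasure μ] {n : ℕ} (hn : 0 < n) (k : ℤ) :
    Integrable (fun x => 1 - |(n : ℝ) * x - (k : ℝ)|) (μ.restrict (gI n k)) := by
  refine Integrable.mono' (integrable_const 1) (Measurable.aestronglyMeasurable (by fun_prop)) ?_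
  filter_upwards [ae_restrict_mem (measurableSet_gI n k)] with x hx
  have h1 := abs_le_one_of_mem_gI hn hx
  have h0 : 0 ≤ |(n : ℝ) * x - (k : ℝ)| := abs_nonneg _
  rw [Real.norm_eq_abs, abs_le]
  constructor <;> linarith

lemma gridWeight_nonneg (μ : Measure ℝ) {n : ℕ} (hn : 0 < n) (k : ℤ) :
    0 ≤ gridWeight μ n k := by
  refine setIntegral_nonneg (measurableSet_gI n k) ?_
  intro x hx
  exact tent_nonneg_of_mem hn hx

lemma lintegral_tent (μ : Measure ℝ) [IsFiniteMeasure μ] {n : ℕ} (hn : 0 < n) (k : ℤ) :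
    ∫⁻ x in gI n k, gd n k x ∂μ = ENNReal.ofReal (gridWeight μ n k) := by
  rw [show gridWeight μ n k = ∫ x, (1 - |(n : ℝ) * x - (k : ℝ)|) ∂(μ.restrict (gI n k)) from rfl]
  rw [ofReal_integral_eq_lintegral_ofReal (integrable_tent μ hn k) ?_]
  · rfl
  · filter_upwards [ae_restrict_mem (measurableSet_gI n k)] with x hx
    exact tent_nonneg_of_mem hn hx

lemma gnu_univ (μ : Measure ℝ) [IsFiniteMeasure μ] {n : ℕ} (hn : 0 < n) (k : ℤ) :
    gnu μ n k Set.univ = ENNReal.ofReal (gridWeight μ n k) := by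
  rw [gnu, withDensity_apply _ MeasurableSet.univ, Measure.restrict_univ]
  rw [show ∫⁻ x, gd n k x ∂(μ.restrict (gI n k)) = ∫⁻ x in gI n k, gd n k x ∂μ from rfl]
  exact lintegral_tent μ hn k

lemma map_fst_gam (μ : Measure ℝ) [IsFiniteMeasure μ] {n : ℕ} (hn : 0 < n) :
    (gam μ n).map Prod.fst = gridDisc μ n := by
  rw [gam, Measure.map_sum measurable_fst.aemeasurable, gridDisc]
  congr 1
  funext k
  rw [Measure.map_map measurable_fst measurable_prodMk_left]
  rw [show (Prod.fst ∘ fun x : ℝ => ((k : ℝ) / n, x)) = fun _ => (k : ℝ) / n from rfl]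
  rw [Measure.map_const, gnu_univ μ hn k]

lemma tsum_g_eq_interp (f : ℝ → ℝ) {n : ℕ} (hn : 0 < n) (x : ℝ) :
    ∑' k : ℤ, (gI n k).indicator
      (fun y => (1 - |(n : ℝ) * y - (k : ℝ)|) * f ((k : ℝ) / n)) x = interp f n x := by
  set m := ⌊(n : ℝ) * x⌋ with hm
  have hmem1 : x ∈ gI n m := (mem_gI_iff hn).mpr (Or.inl rfl)
  have hmem2 : x ∈ gI n (m + 1) := (mem_gI_iff hn).mpr (Or.inr rfl)
  have hfl : (m : ℝ) ≤ (n : ℝ) * x := Int.floor_le _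
  have hfu : (n : ℝ) * x < (m : ℝ) + 1 := Int.lt_floor_add_one _
  rw [tsum_support_two _ m (fun k hk1 hk2 => by
    apply Set.indicator_of_notMem
    rw [mem_gI_iff hn]; push_neg; exact ⟨hk1, hk2⟩)]
  rw [Set.indicator_of_mem hmem1, Set.indicator_of_mem hmem2]
  have e1 : |(n : ℝ) * x - (m : ℝ)| = (n : ℝ) * x - (m : ℝ) := abs_of_nonneg (by linarith)
  have e2 : |(n : ℝ) * x - ((m + 1 : ℤ) : ℝ)| = (m : ℝ) + 1 - (n : ℝ) * x := by
    push_cast; rw [abs_of_nonpos (by linarith)]; ring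
  rw [e1, e2, interp, ← hm]
  have e3 : ((m + 1 : ℤ) : ℝ) = 1 + (m : ℝ) := by push_cast; ring
  rw [e3]
  ring_nf

lemma lintegral_nnnorm_g (μ : Measure ℝ) [IsFiniteMeasure μ] {n : ℕ} (hn : 0 < n)
    (f : ℝ → ℝ) (k : ℤ) :
    ∫⁻ x, (‖(gI n k).indicator
        (fun y => (1 - |(n : ℝ) * y - (k : ℝ)|) * f ((k : ℝ) / n)) x‖₊ : ENNReal) ∂μ
      = ENNReal.ofReal (gridWeight μ n k) * (‖f ((k : ℝ) / n)‖₊ : ENNReal) := by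
  have h1 : ∀ x : ℝ, (‖(gI n k).indicator
      (fun y => (1 - |(n : ℝ) * y - (k : ℝ)|) * f ((k : ℝ) / n)) x‖₊ : ENNReal)
      = (gI n k).indicator (fun y => gd n k y * (‖f ((k : ℝ) / n)‖₊ : ENNReal)) x := by
    intro x
    by_cases hx : x ∈ gI n k
    · rw [Set.indicator_of_mem hx, Set.indicator_of_mem hx]
      rw [nnnorm_mul, ENNReal.coe_mul, gd]
      congr 1
      rw [← Real.enorm_eq_ofReal (tent_nonneg_of_mem hn hx)]; rfl
    · rw [Set.indicator_of_notMem hx, Set.indicator_of_notMem hx]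
      simp
  simp_rw [h1]
  rw [lintegral_indicator (measurableSet_gI n k)]
  rw [lintegral_mul_const _ (measurable_gd n k)]
  rw [lintegral_tent μ hn k]

/-- the grid discretisation `μⁿ` is a probability measure with
`𝒲₁(μⁿ, μ) ≤ 1/n`, and `∫ f dμⁿ = ∫ f_n dμ` for every measurable (suitably integrable) `f`. -/
theorem gridDisc_properties (μ : Measure ℝ) (hμ : IsProbabilityMeasure μ)
    (hmom : Integrable (fun x : ℝ => x) μ) (n : ℕ) (hn : 0 < n) :
    IsProbabilityMeasure (gridDisc μ n) ∧
    W1R (gridDisc μ n) μ ≤ 1 / n ∧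
    ∀ f : ℝ → ℝ, Measurable f → Integrable f (gridDisc μ n) → Integrable (interp f n) μ →
      ∫ x, f x ∂(gridDisc μ n) = ∫ x, interp f n x ∂μ := by
  have hN : (0 : ℝ) < n := by exact_mod_cast hn
  have hsnd : (gam μ n).map Prod.snd = μ := map_snd_gam μ n hn
  have hfst : (gam μ n).map Prod.fst = gridDisc μ n := map_fst_gam μ hn
  -- total mass of γ
  have hγuniv : gam μ n Set.univ = 1 := by
    have h1 : (gam μ n).map Prod.snd Set.univ = μ Set.univ := by rw [hsnd]
    rw [Measure.map_apply measurable_snd MeasurableSet.univ, Set.preimage_univ] at h1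
    rw [h1, measure_univ]
  have hγprob : IsProbabilityMeasure (gam μ n) := ⟨hγuniv⟩
  have hdiscprob : IsProbabilityMeasure (gridDisc μ n) := by
    constructor
    have h1 : (gam μ n).map Prod.fst Set.univ = gam μ n Set.univ := by
      rw [Measure.map_apply measurable_fst MeasurableSet.univ, Set.preimage_univ]
    rw [← hfst, h1, hγuniv]
  refine ⟨hdiscprob, ?_, ?_⟩
  · -- W1 bound
    have hb : ∀ᵐ p ∂(gam μ n), |p.1 - p.2| ≤ 1 / (n : ℝ) := by
      have hms : MeasurableSet {p : ℝ × ℝ | |p.1 - p.2| ≤ 1 / (n : ℝ)} := by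
        apply measurableSet_le <;> fun_prop
      rw [gam, Measure.ae_sum_iff' hms]
      intro k
      rw [ae_map_iff measurable_prodMk_left.aemeasurable hms]
      have hac := (withDensity_absolutelyContinuous (μ.restrict (gI n k)) (gd n k)).ae_le
      refine Filter.Eventually.filter_mono hac ?_
      filter_upwards [ae_restrict_mem (measurableSet_gI n k)] with x hx
      obtain ⟨h1, h2⟩ := hx
      have e1 : ((k : ℝ) - 1) / n = (k : ℝ) / n - 1 / n := by ring
      have e2 : ((k : ℝ) + 1) / n = (k : ℝ) / n + 1 / n := by ring
      rw [e1] at h1; rw [e2] at h2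
      show |((k : ℝ) / (n : ℝ), x).1 - ((k : ℝ) / (n : ℝ), x).2| ≤ 1 / (n : ℝ)
      rw [abs_le]
      exact ⟨by linarith, by linarith⟩
    have hint : Integrable (fun p : ℝ × ℝ => |p.1 - p.2|) (gam μ n) := by
      refine Integrable.mono' (integrable_const (1 / n : ℝ))
        (Measurable.aestronglyMeasurable (by fun_prop)) ?_
      filter_upwards [hb] with p hp
      rwa [Real.norm_eq_abs, abs_abs]
    have hI : ∫ p, |p.1 - p.2| ∂(gam μ n) ≤ 1 / n := by
      calc ∫ p, |p.1 - p.2| ∂(gam μ n) ≤ ∫ _, (1 / n : ℝ) ∂(gam μ n) :=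
            integral_mono_ae hint (integrable_const _) hb
        _ = 1 / n := by rw [integral_const]; simp
    refine csInf_le_of_le ?_ ⟨gam μ n, hγprob, hfst, hsnd, hint, rfl⟩ hI
    refine ⟨0, ?_⟩
    rintro r ⟨γ', -, -, -, -, rfl⟩
    exact integral_nonneg fun p => abs_nonneg _
  · -- integral identity
    intro f hf hfint hinterp
    set g : ℤ → ℝ → ℝ := fun k => (gI n k).indicator
      (fun y => (1 - |(n : ℝ) * y - (k : ℝ)|) * f ((k : ℝ) / n)) with hg
    -- step A
    have hA : ∫ x, f x ∂(gridDisc μ n) = ∑' k : ℤ, gridWeight μ n k * f ((k : ℝ) / n) := by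
      rw [gridDisc] at hfint ⊢
      rw [integral_sum_measure hfint]
      refine tsum_congr fun k => ?_
      rw [integral_smul_measure, integral_dirac f ((k : ℝ) / n)]
      rw [ENNReal.toReal_ofReal (gridWeight_nonneg μ hn k)]
      rfl
    -- finiteness
    have hfin : ∑' k : ℤ, ∫⁻ x, (‖g k x‖₊ : ENNReal) ∂μ ≠ ⊤ := by
      have heq : ∀ k : ℤ, ∫⁻ x, (‖g k x‖₊ : ENNReal) ∂μ
          = ENNReal.ofReal (gridWeight μ n k) * (‖f ((k : ℝ) / n)‖₊ : ENNReal) :=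
        fun k => lintegral_nnnorm_g μ hn f k
      simp_rw [heq]
      have h2 : ∫⁻ x, (‖f x‖₊ : ENNReal) ∂(gridDisc μ n)
          = ∑' k : ℤ, ENNReal.ofReal (gridWeight μ n k) * (‖f ((k : ℝ) / n)‖₊ : ENNReal) := by
        rw [gridDisc, lintegral_sum_measure]
        refine tsum_congr fun k => ?_
        rw [lintegral_smul_measure, lintegral_dirac ((k : ℝ) / n) (fun x => (‖f x‖₊ : ENNReal)), smul_eq_mul]
      rw [← h2]
      exact hfint.2.ne
    have hmeas : ∀ k : ℤ, AEStronglyMeasurable (g k) μ := by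
      intro k
      apply Measurable.aestronglyMeasurable
      exact (Measurable.mul (by fun_prop) (measurable_const)).indicator (measurableSet_gI n k)
    have hB := integral_tsum hmeas hfin
    -- step C: each integral
    have hC : ∀ k : ℤ, ∫ x, g k x ∂μ = gridWeight μ n k * f ((k : ℝ) / n) := by
      intro k
      rw [hg]
      simp only []
      rw [integral_indicator (measurableSet_gI n k)]
      rw [integral_mul_const]
      rfl
    have hD : (fun x => ∑' k : ℤ, g k x) = interp f n := by
      funext x
      exact tsum_g_eq_interp f hn x
    rw [hA, ← tsum_congr hC, ← hB, hD]


end MMOT
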